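/- Let a : ℝ → M_n(ℂ) be continuous with a(t) Hermitian positive semidefinite, let G solve G(0) = Id, G'(t) = -a(t)G(t), and Γ(t) = G(t)G(t)*. Suppose t ↦ ‖Γ(t)‖₂ is differentiable at t₀ and y is a unit eigenvector of Γ(t₀) for the eigenvalue ‖Γ(t₀)‖₂. Then (d/dt ‖Γ(t)‖₂)|_{t=t₀} = -2‖Γ(t₀)‖₂ · ⟨a(t₀)y, y⟩. -/

import Mathlib

open Matrix
open scoped Matrix.Norms.L2Operator ComplexOrder

/-- If `t ↦ ‖Γ t‖₂` (with `Γ t = G t (G t)*`) is differentiable at `t₀` with derivative `d`,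
and `y` is a unit eigenvector of `Γ t₀` for the eigenvalue `‖Γ t₀‖₂`, then
`d = -2 ‖Γ t₀‖₂ ⟨a(t₀) y, y⟩`. -/
theorem stmt_6 {n : ℕ} (a G : ℝ → Matrix (Fin n) (Fin n) ℂ)
    (ha_cont : Continuous a) (ha_psd : ∀ t, (a t).PosSemidef)
    (hG0 : G 0 = 1) (hG : ∀ t, HasDerivAt G (-(a t) * G t) t)
    (t₀ d : ℝ)
    (hd : HasDerivAt (fun t => ‖G t * (G t)ᴴ‖) d t₀)
    (y : Fin n → ℂ) (hy : star y ⬝ᵥ y = 1)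
    (heig : (G t₀ * (G t₀)ᴴ) *ᵥ y = (‖G t₀ * (G t₀)ᴴ‖ : ℂ) • y) :
    d = -2 * ‖G t₀ * (G t₀)ᴴ‖ * (star y ⬝ᵥ (a t₀ *ᵥ y)).re := by
  set lam : ℝ := ‖G t₀ * (G t₀)ᴴ‖ with hlam
  set A : Matrix (Fin n) (Fin n) ℂ := a t₀ with hA
  set s : ℂ := star y ⬝ᵥ (A *ᵥ y) with hs
  -- the linear functional M ↦ ⟨M y, y⟩
  let L₀ : Matrix (Fin n) (Fin n) ℂ →ₗ[ℂ] ℂ :=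
    { toFun := fun M => star y ⬝ᵥ (M *ᵥ y)
      map_add' := fun M N => by simp [Matrix.add_mulVec, dotProduct_add]
      map_smul' := fun c M => by simp [Matrix.smul_mulVec] }
  let L : Matrix (Fin n) (Fin n) ℂ →L[ℂ] ℂ := L₀.toContinuousLinearMap
  have hLapp : ∀ M, L M = star y ⬝ᵥ (M *ᵥ y) := fun M => rfl
  -- derivative of Γ
  have hGH : HasDerivAt (fun t => (G t)ᴴ) ((-(a t₀) * G t₀)ᴴ) t₀ := by have := (hG t₀).star; exact this
  have hΓ : HasDerivAt (fun t => G t * (G t)ᴴ)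
      ((-(a t₀) * G t₀) * (G t₀)ᴴ + G t₀ * (-(a t₀) * G t₀)ᴴ) t₀ := (hG t₀).mul hGH
  set Γ' : Matrix (Fin n) (Fin n) ℂ := (-(a t₀) * G t₀) * (G t₀)ᴴ + G t₀ * (-(a t₀) * G t₀)ᴴ
    with hΓ'def
  -- derivative of f t = re ⟨Γ t y, y⟩
  have hf : HasDerivAt (fun t => (star y ⬝ᵥ ((G t * (G t)ᴴ) *ᵥ y)).re) ((L Γ').re) t₀ := by
    have h1 : HasDerivAt (fun t => L (G t * (G t)ᴴ)) (L Γ') t₀ :=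
      (L.restrictScalars ℝ).hasFDerivAt.comp_hasDerivAt t₀ hΓ
    exact Complex.reCLM.hasFDerivAt.comp_hasDerivAt t₀ h1
  -- ⟨Γ t y, y⟩.re ≤ ‖Γ t‖
  have hle : ∀ t, (star y ⬝ᵥ ((G t * (G t)ᴴ) *ᵥ y)).re ≤ ‖G t * (G t)ᴴ‖ := by
    intro t
    set Y : EuclideanSpace ℂ (Fin n) := (WithLp.equiv 2 _).symm y with hY
    have hYnorm : ‖Y‖ = 1 := by
      have h1 : (inner ℂ Y Y : ℂ) = 1 := by
        rw [hY, WithLp.equiv_symm_apply, EuclideanSpace.inner_toLp_toLp, dotProduct_comm]; exact hy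
      have h3 : (‖Y‖ : ℝ) ^ 2 = 1 := by
        rw [norm_sq_eq_re_inner (𝕜 := ℂ) Y, h1]; simp
      nlinarith [norm_nonneg Y]
    set Z : EuclideanSpace ℂ (Fin n) := (WithLp.equiv 2 _).symm ((G t * (G t)ᴴ) *ᵥ y) with hZ
    have hinner : (inner ℂ Y Z : ℂ) = star y ⬝ᵥ ((G t * (G t)ᴴ) *ᵥ y) := by
      rw [hY, hZ, WithLp.equiv_symm_apply, EuclideanSpace.inner_toLp_toLp, dotProduct_comm]
    have h4 : (star y ⬝ᵥ ((G t * (G t)ᴴ) *ᵥ y)).re ≤ ‖(inner ℂ Y Z : ℂ)‖ := by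
      rw [hinner]
      exact Complex.re_le_norm _
    have h5 : ‖(inner ℂ Y Z : ℂ)‖ ≤ ‖Y‖ * ‖Z‖ := norm_inner_le_norm Y Z
    have h6 : ‖Z‖ ≤ ‖G t * (G t)ᴴ‖ * ‖Y‖ := (G t * (G t)ᴴ).l2_opNorm_mulVec Y
    rw [hYnorm] at h5 h6
    simpa using h4.trans (h5.trans (by simpa using h6))
  -- local minimum of ‖Γ t‖ - f t at t₀
  have h0 : (star y ⬝ᵥ ((G t₀ * (G t₀)ᴴ) *ᵥ y)).re = lam := by
    rw [heig]
    simp [dotProduct_smul, hy]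
  have hmin : IsLocalMin (fun t => ‖G t * (G t)ᴴ‖ - (star y ⬝ᵥ ((G t * (G t)ᴴ) *ᵥ y)).re) t₀ :=
    Filter.Eventually.of_forall fun t => by
      simp only [h0, ← hlam, sub_self]
      exact sub_nonneg.2 (hle t)
  have hsub : HasDerivAt (fun t => ‖G t * (G t)ᴴ‖ - (star y ⬝ᵥ ((G t * (G t)ᴴ) *ᵥ y)).re)
      (d - (L Γ').re) t₀ := hd.sub hf
  have hzero : d - (L Γ').re = 0 := hmin.hasDerivAt_eq_zero hsub
  -- compute L Γ'
  have hherm : (G t₀ * (G t₀)ᴴ)ᴴ = G t₀ * (G t₀)ᴴ := by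
    simp [Matrix.conjTranspose_mul, Matrix.mul_assoc]
  have hAH : Aᴴ = A := (ha_psd t₀).1
  have hΓ'eq : Γ' = -(A * (G t₀ * (G t₀)ᴴ)) - (G t₀ * (G t₀)ᴴ) * A := by
    rw [hΓ'def]
    simp only [Matrix.conjTranspose_mul, Matrix.conjTranspose_neg, ← hA, hAH]
    noncomm_ring
  have hLΓ' : L Γ' = -2 * (lam : ℂ) * s := by
    rw [hLapp, hΓ'eq]
    have e1 : (A * (G t₀ * (G t₀)ᴴ)) *ᵥ y = (lam : ℂ) • (A *ᵥ y) := by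
      rw [← Matrix.mulVec_mulVec, heig, Matrix.mulVec_smul]
    have e2 : ((G t₀ * (G t₀)ᴴ) * A) *ᵥ y = (G t₀ * (G t₀)ᴴ) *ᵥ (A *ᵥ y) := by
      rw [← Matrix.mulVec_mulVec]
    have e3 : star y ⬝ᵥ ((G t₀ * (G t₀)ᴴ) *ᵥ (A *ᵥ y)) = (lam : ℂ) * s := by
      rw [Matrix.dotProduct_mulVec,
        show star y ᵥ* (G t₀ * (G t₀)ᴴ) = star ((G t₀ * (G t₀)ᴴ) *ᵥ y) from by
          rw [Matrix.star_mulVec, hherm], heig]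
      simp [smul_dotProduct, hs, Matrix.dotProduct_mulVec, mul_comm,
        Matrix.smul_vecMul, Complex.real_smul]
    rw [Matrix.sub_mulVec, Matrix.neg_mulVec, dotProduct_sub, dotProduct_neg,
      e1, e2, e3]
    simp only [dotProduct_smul, smul_eq_mul, ← hs]
    ring
  have hre : (L Γ').re = -2 * lam * s.re := by
    rw [hLΓ']
    have : (-2 : ℂ) * (lam : ℂ) * s = ((-2 * lam : ℝ) : ℂ) * s := by push_cast; ring
    rw [this, Complex.re_ofReal_mul]
  have : d = (L Γ').re := by linarith
  rw [this, hre]
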